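/- For every integer n ≥ 1, Σ_{k=0}^{⌊n/2⌋} (2k)!·S(n,2k) = (B(n) + (-1)^n)/2, i.e., 2·Σ_{k=0}^{⌊n/2⌋} (2k)!·S(n,2k) = B(n) + (-1)^n. -/

import Mathlib

open Finset

/-- Stirling numbers of the second kind. -/
def S : ℕ → ℕ → ℕ
  | 0, 0 => 1
  | 0, _ + 1 => 0
  | _ + 1, 0 => 0
  | n + 1, k + 1 => (k + 1) * S n (k + 1) + S n k

/-- Ordered Bell (Fubini) numbers. -/
def B (n : ℕ) : ℕ := ∑ k ∈ range (n + 1), k.factorial * S n k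

lemma S_zero_of_lt : ∀ n k, n < k → S n k = 0 := by
  intro n
  induction n with
  | zero =>
    intro k hk
    cases k with
    | zero => omega
    | succ k => rfl
  | succ n ih =>
    intro k hk
    cases k with
    | zero => omega
    | succ k =>
      show (k + 1) * S n (k + 1) + S n k = 0
      rw [ih (k + 1) (by omega), ih k (by omega)]
      ring

lemma Talt (n : ℕ) :
    ∑ k ∈ range (n + 1), ((-1 : ℤ) ^ k * k.factorial * S n k) = (-1) ^ n := by
  induction n with
  | zero => simp [S]
  | succ n ih =>
    have h0 : ∑ k ∈ range (n + 2), ((-1 : ℤ) ^ k * k.factorial * S (n + 1) k)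
        = ∑ k ∈ range (n + 1),
            ((-1 : ℤ) ^ (k + 1) * (k + 1).factorial * S (n + 1) (k + 1)) := by
      rw [Finset.sum_range_succ']
      simp [S]
    have h1 : ∀ k ∈ range (n + 1),
        ((-1 : ℤ) ^ (k + 1) * (k + 1).factorial * S (n + 1) (k + 1))
        = ((-1 : ℤ) ^ (k + 1) * ((k + 1).factorial * (k + 1)) * S n (k + 1))
          + ((-1 : ℤ) ^ (k + 1) * (k + 1).factorial * S n k) := by
      intro k _
      show ((-1 : ℤ) ^ (k + 1) * (k + 1).factorial *
          (((k + 1) * S n (k + 1) + S n k : ℕ) : ℤ)) = _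
      push_cast
      ring
    have h2 : ∑ k ∈ range (n + 1),
        ((-1 : ℤ) ^ (k + 1) * ((k + 1).factorial * (k + 1)) * S n (k + 1))
        = ∑ k ∈ range (n + 1), ((-1 : ℤ) ^ k * (k.factorial * k) * S n k) := by
      have hs := Finset.sum_range_succ'
          (fun k => (-1 : ℤ) ^ k * (k.factorial * k) * S n k) (n + 1)
      rw [Finset.sum_range_succ] at hs
      simp only [S_zero_of_lt n (n + 1) (by omega)] at hs
      simpa using hs.symm
    rw [h0, Finset.sum_congr rfl h1, Finset.sum_add_distrib, h2,
      ← Finset.sum_add_distrib]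
    have h3 : ∀ k ∈ range (n + 1),
        ((-1 : ℤ) ^ k * (k.factorial * k) * S n k
          + (-1 : ℤ) ^ (k + 1) * (k + 1).factorial * S n k)
        = -((-1 : ℤ) ^ k * k.factorial * S n k) := by
      intro k _
      rw [Nat.factorial_succ]
      push_cast
      ring
    rw [Finset.sum_congr rfl h3, Finset.sum_neg_distrib, ih]
    ring

theorem stmt9 (n : ℕ) (hn : 1 ≤ n) :
    2 * ∑ k ∈ range (n / 2 + 1), ((2 * k).factorial * S n (2 * k) : ℤ) =
      (B n : ℤ) + (-1) ^ n := by
  have himg : (range (n + 1)).filter (fun k => Even k)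
      = (range (n / 2 + 1)).image (fun k => 2 * k) := by
    ext x
    simp only [mem_filter, mem_range, mem_image, Nat.even_iff]
    constructor
    · rintro ⟨hx, he⟩; exact ⟨x / 2, by omega, by omega⟩
    · rintro ⟨y, hy, rfl⟩; omega
  have hinj : Set.InjOn (fun k => 2 * k) (range (n / 2 + 1)) :=
    fun a _ b _ h => by dsimp only at h; omega
  have hsum : ∑ k ∈ range (n / 2 + 1), ((2 * k).factorial * S n (2 * k) : ℤ)
      = ∑ k ∈ (range (n + 1)).filter (fun k => Even k),
          ((k.factorial * S n k : ℕ) : ℤ) := by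
    rw [himg, Finset.sum_image hinj]
    push_cast
    rfl
  rw [hsum]
  have heven : ∑ k ∈ (range (n + 1)).filter (fun k => Even k),
      ((1 + (-1 : ℤ) ^ k) * (k.factorial * S n k))
      = 2 * ∑ k ∈ (range (n + 1)).filter (fun k => Even k),
          ((k.factorial * S n k : ℕ) : ℤ) := by
    rw [Finset.mul_sum]
    refine Finset.sum_congr rfl ?_
    intro k hk
    rw [mem_filter] at hk
    rw [hk.2.neg_one_pow]
    push_cast
    ring
  have hodd : ∑ k ∈ (range (n + 1)).filter (fun k => ¬ Even k),
      ((1 + (-1 : ℤ) ^ k) * (k.factorial * S n k)) = 0 := by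
    refine Finset.sum_eq_zero ?_
    intro k hk
    rw [mem_filter] at hk
    rw [(Nat.not_even_iff_odd.mp hk.2).neg_one_pow]
    ring
  have hsplit := Finset.sum_filter_add_sum_filter_not (range (n + 1))
      (fun k => Even k)
      (fun k => ((1 + (-1 : ℤ) ^ k) * (k.factorial * S n k)))
  rw [heven, hodd, add_zero] at hsplit
  rw [hsplit]
  have hT := Talt n
  have hB : (B n : ℤ) = ∑ k ∈ range (n + 1), ((k.factorial * S n k : ℕ) : ℤ) := by
    rw [B]; push_cast; rfl
  rw [hB, ← hT, ← Finset.sum_add_distrib]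
  refine Finset.sum_congr rfl ?_
  intro k _
  push_cast
  ring
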